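/- Let S: (0,1) ∖ ℚ → (0,1) ∖ ℚ be the Gauss map S(y) = 1/y − ⌊1/y⌋, and let D = {(y,z) : y ∈ (0,1), 0 < z < 1/(1+y)}. Define S̄: D → D by S̄(y,z) = (S(y), y(1 − yz)) (on points with y irrational). Then the normalized restriction λ of Lebesgue measure to D is S̄-invariant, and the pushforward of λ under the projection p(y,z) = y to the first coordinate is the Gauss–Kuzmin measure ν(A) = (1/log 2)∫_A dx/(1+x). -/

import Mathlib

open MeasureTheory

/-- The Gauss map `y ↦ {1/y}`. -/
noncomputable def gaussMap : ℝ → ℝ := fun y => Int.fract y⁻¹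

/-- The domain `D = {(y,z) : y ∈ (0,1), 0 < z < 1/(1+y)}` of the invertible extension. -/
def Dset : Set (ℝ × ℝ) :=
  {q | q.1 ∈ Set.Ioo (0 : ℝ) 1 ∧ 0 < q.2 ∧ q.2 < (1 + q.1)⁻¹}

/-- The normalized restriction `λ` of Lebesgue measure to `D`. -/
noncomputable def lamD : Measure (ℝ × ℝ) :=
  (ENNReal.ofReal (Real.log 2)⁻¹) • (volume.restrict Dset)

/-- The Gauss–Kuzmin measure `ν(A) = (1/log 2) ∫_A dx/(1+x)` on `(0,1)`. -/
noncomputable def gaussKuzmin : Measure ℝ :=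
  (volume.restrict (Set.Ioo (0 : ℝ) 1)).withDensity
    fun x => ENNReal.ofReal ((Real.log 2)⁻¹ * (1 + x)⁻¹)

noncomputable def Tmap : ℝ × ℝ → ℝ × ℝ :=
  fun q => (gaussMap q.1, q.1 * (1 - q.1 * q.2))

lemma measurableSet_Dset : MeasurableSet Dset := by
  apply MeasurableSet.inter
  · exact measurable_fst measurableSet_Ioo
  · exact (measurableSet_lt measurable_const measurable_snd).inter
      (measurableSet_lt measurable_snd ((measurable_const.add measurable_fst).inv))

lemma map_fst_eq : Measure.map Prod.fst (volume.restrict Dset)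
    = (volume.restrict (Set.Ioo (0 : ℝ) 1)).withDensity
        fun x => ENNReal.ofReal (1 + x)⁻¹ := by
  ext s hs
  rw [Measure.map_apply measurable_fst hs, Measure.restrict_apply (measurable_fst hs),
    withDensity_apply _ hs, Measure.restrict_restrict hs]
  rw [Measure.volume_eq_prod, Measure.prod_apply ((measurable_fst hs).inter measurableSet_Dset)]
  have : ∀ x : ℝ, volume (Prod.mk x ⁻¹' (Prod.fst ⁻¹' s ∩ Dset))
      = (s ∩ Set.Ioo 0 1).indicator (fun x => ENNReal.ofReal (1 + x)⁻¹) x := by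
    intro x
    by_cases hx : x ∈ s ∩ Set.Ioo 0 1
    · have : Prod.mk x ⁻¹' (Prod.fst ⁻¹' s ∩ Dset) = Set.Ioo 0 (1 + x)⁻¹ := by
        ext z
        simp only [Set.mem_preimage, Set.mem_inter_iff, Dset, Set.mem_setOf_eq, Set.mem_Ioo]
        exact ⟨fun h => ⟨h.2.2.1, h.2.2.2⟩, fun h => ⟨hx.1, hx.2, h.1, h.2⟩⟩
      rw [this, Set.indicator_of_mem hx, Real.volume_Ioo, sub_zero]
    · have : Prod.mk x ⁻¹' (Prod.fst ⁻¹' s ∩ Dset) = ∅ := by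
        ext z
        simp only [Set.mem_preimage, Set.mem_inter_iff, Dset, Set.mem_setOf_eq, Set.mem_empty_iff_false, iff_false]
        rintro ⟨h1, h2, _⟩
        exact hx ⟨h1, h2⟩
      rw [this, Set.indicator_of_notMem hx, measure_empty]
  rw [lintegral_congr this, lintegral_indicator (hs.inter measurableSet_Ioo)]

def Dn (n : ℕ) : Set (ℝ × ℝ) :=
  {q | q.1 ∈ Set.Ioo ((n + 2 : ℝ))⁻¹ ((n + 1 : ℝ))⁻¹ ∧ q.2 ∈ Set.Ioo 0 (1 + q.1)⁻¹}

def En (n : ℕ) : Set (ℝ × ℝ) :=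
  {q | q.1 ∈ Set.Ioo (0 : ℝ) 1 ∧ q.2 ∈ Set.Ioo ((n + 2 + q.1 : ℝ))⁻¹ ((n + 1 + q.1 : ℝ))⁻¹}

lemma mem_Ioo_inv {a b y : ℝ} (ha : 0 < a) (hb : 0 < b) (hy : 0 < y) :
    y ∈ Set.Ioo a⁻¹ b⁻¹ ↔ y⁻¹ ∈ Set.Ioo b a := by
  rw [Set.mem_Ioo, Set.mem_Ioo]
  exact ⟨fun h => ⟨(lt_inv_comm₀ hy hb).1 h.2, (inv_lt_comm₀ ha hy).1 h.1⟩,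
    fun h => ⟨(inv_lt_comm₀ ha hy).2 h.2, (lt_inv_comm₀ hy hb).2 h.1⟩⟩

lemma measurable_Tmap : Measurable Tmap := by
  apply Measurable.prodMk
  · exact measurable_fract.comp measurable_fst.inv
  · exact measurable_fst.mul (measurable_const.sub (measurable_fst.mul measurable_snd))

lemma measurableSet_Dn (n : ℕ) : MeasurableSet (Dn n) := by
  exact (measurable_fst measurableSet_Ioo).inter
    ((measurableSet_lt measurable_const measurable_snd).inter
      (measurableSet_lt measurable_snd ((measurable_const.add measurable_fst).inv)))

lemma measurableSet_En (n : ℕ) : MeasurableSet (En n) := by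
  exact (measurable_fst measurableSet_Ioo).inter
    ((measurableSet_lt ((measurable_const.add measurable_fst).inv) measurable_snd).inter
      (measurableSet_lt measurable_snd ((measurable_const.add measurable_fst).inv)))

lemma gauss_on_Dn {n : ℕ} {y : ℝ} (hy : y ∈ Set.Ioo ((n + 2 : ℝ))⁻¹ ((n + 1 : ℝ))⁻¹) :
    gaussMap y = y⁻¹ - (n + 1 : ℝ) := by
  have hy0 : 0 < y := lt_trans (by positivity) hy.1
  have hinv : y⁻¹ ∈ Set.Ioo ((n + 1 : ℝ)) ((n + 2 : ℝ)) :=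
    (mem_Ioo_inv (by positivity) (by positivity) hy0).1 hy
  have hfloor : ⌊y⁻¹⌋ = (n : ℤ) + 1 := by
    rw [Int.floor_eq_iff]
    constructor
    · push_cast; exact le_of_lt hinv.1
    · push_cast; linarith [hinv.2]
  simp only [gaussMap, Int.fract, hfloor]
  push_cast
  ring

lemma Tmap_image_Dn (n : ℕ) : Tmap '' Dn n = En n := by
  ext p
  constructor
  · rintro ⟨q, ⟨hy, hz⟩, rfl⟩
    have hy0 : 0 < q.1 := lt_trans (by positivity) hy.1
    have hinv : q.1⁻¹ ∈ Set.Ioo ((n + 1 : ℝ)) ((n + 2 : ℝ)) :=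
      (mem_Ioo_inv (by positivity) (by positivity) hy0).1 hy
    have h1y : (0:ℝ) < 1 + q.1 := by linarith
    have key : q.1 - q.1 ^ 2 * (1 + q.1)⁻¹ - q.1 * (1 + q.1)⁻¹ = 0 := by
      field_simp
      ring
    have hzu : q.1 ^ 2 * q.2 < q.1 ^ 2 * (1 + q.1)⁻¹ :=
      mul_lt_mul_of_pos_left hz.2 (by positivity)
    refine ⟨?_, ?_⟩
    · simp only [Tmap, gauss_on_Dn hy, Set.mem_Ioo]
      constructor
      · linarith [hinv.1]
      · linarith [hinv.2]
    · simp only [Tmap, gauss_on_Dn hy, Set.mem_Ioo]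
      have e1 : (n + 1 + (q.1⁻¹ - (n + 1)) : ℝ) = q.1⁻¹ := by ring
      have e2 : (n + 2 + (q.1⁻¹ - (n + 1)) : ℝ) = q.1⁻¹ + 1 := by ring
      have e3 : (q.1⁻¹ + 1)⁻¹ = q.1 * (1 + q.1)⁻¹ := by
        rw [inv_eq_iff_eq_inv]
        field_simp
      rw [e1, e2, inv_inv, e3]
      constructor
      · nlinarith [hzu, key]
      · nlinarith [mul_pos (mul_pos hy0 hy0) hz.1]
  · rintro ⟨hx, hw⟩
    set x := p.1 with hxdef
    set w := p.2 with hwdef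
    have hnx1 : (0:ℝ) < n + 1 + x := by have := hx.1; positivity
    have hnx2 : (0:ℝ) < n + 2 + x := by have := hx.1; positivity
    set y : ℝ := ((n : ℝ) + 1 + x)⁻¹ with hydef
    have hy0 : 0 < y := by positivity
    have hyinv : y⁻¹ = (n : ℝ) + 1 + x := by rw [hydef, inv_inv]
    have h1y : (0:ℝ) < 1 + y := by linarith
    set z : ℝ := (y - w) / y ^ 2 with hzdef
    have hyIoo : y ∈ Set.Ioo ((n + 2 : ℝ))⁻¹ ((n + 1 : ℝ))⁻¹ := by
      rw [mem_Ioo_inv (by positivity) (by positivity) hy0, hyinv]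
      exact ⟨by linarith [hx.1], by linarith [hx.2]⟩
    have hlowid : ((n : ℝ) + 2 + x)⁻¹ = y - y ^ 2 * (1 + y)⁻¹ := by
      rw [hydef]
      rw [eq_sub_iff_add_eq]
      field_simp
      ring
    have hz0 : 0 < z := by
      rw [hzdef]
      apply div_pos _ (by positivity)
      have : w < y := hw.2
      linarith
    have hz1 : z < (1 + y)⁻¹ := by
      rw [hzdef, div_lt_iff₀ (by positivity)]
      have h1 : ((n : ℝ) + 2 + x)⁻¹ < w := hw.1
      rw [hlowid] at h1
      nlinarith [h1]
    refine ⟨(y, z), ⟨hyIoo, hz0, hz1⟩, ?_⟩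
    have hT1 : gaussMap y = x := by
      rw [gauss_on_Dn hyIoo, hyinv]; ring
    have hT2 : y * (1 - y * z) = w := by
      rw [hzdef]
      field_simp
      ring
    rw [Tmap]
    simp only
    rw [hT1, hT2]

lemma injOn_Tmap (n : ℕ) : Set.InjOn Tmap (Dn n) := by
  rintro q hq q' hq' h
  have hy0 : q.1 ≠ 0 := (lt_trans (by positivity) hq.1.1).ne'
  have h1 : gaussMap q.1 = gaussMap q'.1 := congrArg Prod.fst h
  rw [gauss_on_Dn hq.1, gauss_on_Dn hq'.1] at h1
  have hyy : q.1 = q'.1 := inv_injective (by linarith)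
  have h2 : q.1 * (1 - q.1 * q.2) = q'.1 * (1 - q'.1 * q'.2) := congrArg Prod.snd h
  rw [← hyy] at h2
  have hzz : q.2 = q'.2 := by
    field_simp at h2
    exact mul_left_cancel₀ hy0 (by linarith)
  exact Prod.ext hyy hzz

lemma clm_det (L : ℝ × ℝ →L[ℝ] ℝ × ℝ) :
    L.det = (L (1, 0)).1 * (L (0, 1)).2 - (L (0, 1)).1 * (L (1, 0)).2 := by
  have h := LinearMap.det_toMatrix (Module.Basis.finTwoProd ℝ) (L : ℝ × ℝ →ₗ[ℝ] ℝ × ℝ)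
  rw [ContinuousLinearMap.det, ← h, Matrix.det_fin_two]
  simp [LinearMap.toMatrix_apply, Module.Basis.finTwoProd_zero, Module.Basis.finTwoProd_one]

noncomputable def dT (q : ℝ × ℝ) : ℝ × ℝ →L[ℝ] ℝ × ℝ :=
  ((-(q.1 ^ 2)⁻¹) • ContinuousLinearMap.fst ℝ ℝ ℝ).prod
    (q.1 • ((0 : ℝ × ℝ →L[ℝ] ℝ) -
        (q.1 • ContinuousLinearMap.snd ℝ ℝ ℝ + q.2 • ContinuousLinearMap.fst ℝ ℝ ℝ)) +
      (1 - q.1 * q.2) • ContinuousLinearMap.fst ℝ ℝ ℝ)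

lemma dT_det (q : ℝ × ℝ) (hq : q.1 ≠ 0) : (dT q).det = 1 := by
  rw [clm_det]
  simp [dT]
  field_simp

lemma hasFDerivAt_Tn (c : ℝ) (q : ℝ × ℝ) (hq : q.1 ≠ 0) :
    HasFDerivAt (fun p : ℝ × ℝ => (p.1⁻¹ - c, p.1 * (1 - p.1 * p.2))) (dT q) q := by
  apply HasFDerivAt.prodMk
  · exact ((hasDerivAt_inv hq).comp_hasFDerivAt q hasFDerivAt_fst).sub_const c
  · exact hasFDerivAt_fst.mul
      ((hasFDerivAt_const (1 : ℝ) q).sub (hasFDerivAt_fst.mul hasFDerivAt_snd))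

lemma vol_image {n : ℕ} {s : Set (ℝ × ℝ)} (hs : MeasurableSet s) (hsub : s ⊆ Dn n) :
    volume (Tmap '' s) = volume s := by
  have hne : ∀ q ∈ s, q.1 ≠ 0 := fun q hq => (lt_trans (by positivity) (hsub hq).1.1).ne'
  have hf' : ∀ q ∈ s, HasFDerivWithinAt Tmap (dT q) s q := by
    intro q hq
    refine ((hasFDerivAt_Tn ((n : ℝ) + 1) q (hne q hq)).hasFDerivWithinAt).congr ?_ ?_
    · intro p hp
      simp only [Tmap, gauss_on_Dn (hsub hp).1]
    · simp only [Tmap, gauss_on_Dn (hsub hq).1]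
  rw [← lintegral_abs_det_fderiv_eq_addHaar_image volume hs hf' ((injOn_Tmap n).mono hsub)]
  rw [setLIntegral_congr_fun hs (fun q hq => by
    rw [dT_det q (hne q hq), abs_one, ENNReal.ofReal_one])]
  exact setLIntegral_one s

lemma graph_null (f : ℝ → ℝ) (hf : Measurable f) :
    volume {q : ℝ × ℝ | q.2 = f q.1} = 0 := by
  have hm : MeasurableSet {q : ℝ × ℝ | q.2 = f q.1} :=
    measurableSet_eq_fun measurable_snd (hf.comp measurable_fst)
  rw [Measure.volume_eq_prod, Measure.measure_prod_null hm]
  filter_upwards with x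
  have : Prod.mk x ⁻¹' {q : ℝ × ℝ | q.2 = f q.1} = {f x} := by
    ext z; simp [Set.mem_preimage]
  rw [this]
  exact measure_singleton _

lemma vline_null (c : ℝ) : volume {q : ℝ × ℝ | q.1 = c} = 0 := by
  have : {q : ℝ × ℝ | q.1 = c} = ({c} : Set ℝ) ×ˢ (Set.univ : Set ℝ) := by
    ext ⟨a, b⟩; simp [Set.mem_prod, eq_comm]
  rw [this, Measure.volume_eq_prod, Measure.prod_prod, Real.volume_singleton, zero_mul]

lemma Dn_subset (n : ℕ) : Dn n ⊆ Dset := by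
  rintro q ⟨hy, hz⟩
  have hy0 : 0 < q.1 := lt_trans (by positivity) hy.1
  have h1 : ((n : ℝ) + 1)⁻¹ ≤ 1 := by
    rw [inv_le_one_iff₀]
    right
    have : (0:ℝ) ≤ (n:ℝ) := Nat.cast_nonneg n
    linarith
  exact ⟨⟨hy0, lt_of_lt_of_le hy.2 h1⟩, hz.1, hz.2⟩

lemma En_subset (n : ℕ) : En n ⊆ Dset := by
  rintro q ⟨hx, hw⟩
  have hx0 : 0 < q.1 := hx.1
  have h0 : (0:ℝ) < ((n : ℝ) + 2 + q.1)⁻¹ := by positivity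
  have h1 : ((n : ℝ) + 1 + q.1)⁻¹ ≤ (1 + q.1)⁻¹ := by
    apply inv_anti₀ (by linarith)
    have : (0:ℝ) ≤ (n:ℝ) := Nat.cast_nonneg n
    linarith
  exact ⟨hx, lt_trans h0 hw.1, lt_of_lt_of_le hw.2 h1⟩

lemma Dset_cover_Dn : volume (Dset \ ⋃ n, Dn n) = 0 := by
  refine measure_mono_null
    (?_ : _ ⊆ ⋃ n : ℕ, {q : ℝ × ℝ | q.1 = ((n : ℝ) + 1)⁻¹})
    (measure_iUnion_null fun n => vline_null _)
  rintro q ⟨hq, hnot⟩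
  have hy0 : 0 < q.1 := hq.1.1
  have ht : 1 < q.1⁻¹ := (one_lt_inv₀ hy0).2 hq.1.2
  set m : ℤ := ⌊q.1⁻¹⌋ with hm
  have hm1 : 1 ≤ m := by
    rw [hm, Int.le_floor]; exact_mod_cast ht.le
  have hmpos : (0:ℝ) < (m:ℝ) := by exact_mod_cast hm1
  have hcast : (((m - 1).toNat : ℝ)) = (m : ℝ) - 1 := by
    have h5 : ((m - 1).toNat : ℤ) = m - 1 := Int.toNat_of_nonneg (by omega)
    exact_mod_cast congrArg (fun z : ℤ => (z : ℝ)) h5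
  rcases eq_or_lt_of_le (Int.floor_le q.1⁻¹) with heq | hlt
  · refine Set.mem_iUnion.2 ⟨(m - 1).toNat, ?_⟩
    show q.1 = _
    rw [hcast, show ((m:ℝ) - 1 + 1) = (m:ℝ) by ring]
    have h2 : (m:ℝ) = q.1⁻¹ := heq
    rw [h2, inv_inv]
  · exfalso
    apply hnot
    refine Set.mem_iUnion.2 ⟨(m - 1).toNat, ?_, hq.2⟩
    show q.1 ∈ Set.Ioo _ _
    rw [hcast, show ((m:ℝ) - 1 + 2) = (m:ℝ) + 1 by ring,
      show ((m:ℝ) - 1 + 1) = (m:ℝ) by ring]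
    rw [mem_Ioo_inv (by linarith) hmpos hy0]
    exact ⟨hlt, Int.lt_floor_add_one q.1⁻¹⟩

lemma Dset_cover_En : volume (Dset \ ⋃ n, En n) = 0 := by
  refine measure_mono_null
    (?_ : _ ⊆ ⋃ n : ℕ, {q : ℝ × ℝ | q.2 = ((n : ℝ) + 1 + q.1)⁻¹})
    (measure_iUnion_null fun n =>
      graph_null _ ((measurable_const.add measurable_id).inv))
  rintro q ⟨hq, hnot⟩
  obtain ⟨hx, hw0, hw1⟩ := hq
  have h1x : (0:ℝ) < 1 + q.1 := by linarith [hx.1]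
  have ht : 1 + q.1 < q.2⁻¹ := (lt_inv_comm₀ hw0 h1x).1 hw1
  set m : ℤ := ⌊q.2⁻¹ - q.1⌋ with hm
  have hm1 : 1 ≤ m := by
    rw [hm, Int.le_floor]
    push_cast
    linarith
  have hmpos : (0:ℝ) < (m:ℝ) := by exact_mod_cast hm1
  have hcast : (((m - 1).toNat : ℝ)) = (m : ℝ) - 1 := by
    have h5 : ((m - 1).toNat : ℤ) = m - 1 := Int.toNat_of_nonneg (by omega)
    exact_mod_cast congrArg (fun z : ℤ => (z : ℝ)) h5
  rcases eq_or_lt_of_le (Int.floor_le (q.2⁻¹ - q.1)) with heq | hlt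
  · refine Set.mem_iUnion.2 ⟨(m - 1).toNat, ?_⟩
    show q.2 = _
    rw [hcast, show ((m:ℝ) - 1 + 1 + q.1) = (m:ℝ) + q.1 by ring]
    have h2 : (m:ℝ) + q.1 = q.2⁻¹ := by
      have h3 : (m:ℝ) = q.2⁻¹ - q.1 := heq
      linarith
    rw [h2, inv_inv]
  · exfalso
    apply hnot
    refine Set.mem_iUnion.2 ⟨(m - 1).toNat, hx, ?_⟩
    show q.2 ∈ Set.Ioo _ _
    rw [hcast, show ((m:ℝ) - 1 + 2 + q.1) = (m:ℝ) + q.1 + 1 by ring,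
      show ((m:ℝ) - 1 + 1 + q.1) = (m:ℝ) + q.1 by ring]
    rw [mem_Ioo_inv (by linarith [hx.1]) (by linarith [hx.1]) hw0]
    have h4 := Int.lt_floor_add_one (q.2⁻¹ - q.1)
    rw [← hm] at h4
    exact ⟨by linarith, by linarith⟩

lemma Dn_disj : Pairwise (Function.onFun Disjoint Dn) := by
  have key : ∀ a b : ℕ, a < b → Disjoint (Dn a) (Dn b) := by
    intro a b hab
    rw [Set.disjoint_left]
    rintro q ⟨hya, _⟩ ⟨hyb, _⟩
    have h1 : ((b : ℝ) + 1)⁻¹ ≤ ((a : ℝ) + 2)⁻¹ := by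
      apply inv_anti₀ (by positivity)
      have : (a : ℝ) + 1 ≤ (b : ℝ) := by exact_mod_cast hab
      linarith
    linarith [hya.1, hyb.2]
  intro a b hab
  rcases hab.lt_or_gt with h | h
  · exact key a b h
  · exact (key b a h).symm

lemma En_disj : Pairwise (Function.onFun Disjoint En) := by
  have key : ∀ a b : ℕ, a < b → Disjoint (En a) (En b) := by
    intro a b hab
    rw [Set.disjoint_left]
    rintro q ⟨hx, hwa⟩ ⟨_, hwb⟩
    have hx0 : 0 < q.1 := hx.1
    have h1 : ((b : ℝ) + 1 + q.1)⁻¹ ≤ ((a : ℝ) + 2 + q.1)⁻¹ := by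
      apply inv_anti₀ (by positivity)
      have : (a : ℝ) + 1 ≤ (b : ℝ) := by exact_mod_cast hab
      linarith
    linarith [hwa.1, hwb.2]
  intro a b hab
  rcases hab.lt_or_gt with h | h
  · exact key a b h
  · exact (key b a h).symm

lemma inter_vol {B C : Set (ℝ × ℝ)} (hBC : B ⊆ C) (hnull : volume (C \ B) = 0)
    (A : Set (ℝ × ℝ)) : volume (A ∩ C) = volume (A ∩ B) := by
  apply le_antisymm
  · calc volume (A ∩ C) ≤ volume ((A ∩ B) ∪ (C \ B)) := by
          apply measure_mono
          rintro q ⟨hqA, hqC⟩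
          by_cases h : q ∈ B
          · exact Or.inl ⟨hqA, h⟩
          · exact Or.inr ⟨hqC, h⟩
      _ ≤ volume (A ∩ B) + volume (C \ B) := measure_union_le _ _
      _ = volume (A ∩ B) := by rw [hnull, add_zero]
  · exact measure_mono (Set.inter_subset_inter_right A hBC)

lemma map_T_eq : Measure.map Tmap (volume.restrict Dset) = volume.restrict Dset := by
  ext A hA
  rw [Measure.map_apply measurable_Tmap hA, Measure.restrict_apply hA,
    Measure.restrict_apply (measurable_Tmap hA)]
  have h1 : volume (Tmap ⁻¹' A ∩ Dset) = ∑' n, volume (Tmap ⁻¹' A ∩ Dn n) := by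
    rw [inter_vol (Set.iUnion_subset Dn_subset) Dset_cover_Dn, Set.inter_iUnion,
      measure_iUnion
        (fun a b hab => ((Dn_disj hab).mono Set.inter_subset_right Set.inter_subset_right))
        (fun n => (measurable_Tmap hA).inter (measurableSet_Dn n))]
  have h3 : volume (A ∩ Dset) = ∑' n, volume (A ∩ En n) := by
    rw [inter_vol (Set.iUnion_subset En_subset) Dset_cover_En, Set.inter_iUnion,
      measure_iUnion
        (fun a b hab => ((En_disj hab).mono Set.inter_subset_right Set.inter_subset_right))
        (fun n => hA.inter (measurableSet_En n))]
  rw [h1, h3]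
  refine tsum_congr fun n => ?_
  rw [← vol_image ((measurable_Tmap hA).inter (measurableSet_Dn n)) Set.inter_subset_right]
  congr 1
  rw [Set.inter_comm, Set.image_inter_preimage, Tmap_image_Dn, Set.inter_comm]


/-- the invertible extension `S̄(y,z) = (S y, y(1-yz))` of the Gauss map
preserves `λ`, and the pushforward of `λ` under the first-coordinate projection is the
Gauss–Kuzmin measure. -/
theorem stmt_10 :
    MeasurePreserving (fun q : ℝ × ℝ => (gaussMap q.1, q.1 * (1 - q.1 * q.2))) lamD lamD
    ∧ Measure.map Prod.fst lamD = gaussKuzmin := by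
  constructor
  · refine ⟨measurable_Tmap, ?_⟩
    show Measure.map Tmap lamD = lamD
    rw [lamD, Measure.map_smul, map_T_eq]
  · rw [lamD, Measure.map_smul, map_fst_eq, gaussKuzmin]
    rw [← withDensity_smul' (ENNReal.ofReal (Real.log 2)⁻¹) _ ENNReal.ofReal_ne_top]
    congr 1
    funext x
    rw [Pi.smul_apply, smul_eq_mul,
      ← ENNReal.ofReal_mul (by positivity : (0:ℝ) ≤ (Real.log 2)⁻¹)]
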